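/- Fix a real a > 0 and an integer M ≥ 1. Define 𝒰(z, a) := z·B(z, 1 + a) (B the Euler Beta function), 𝒱_M(z, a) := ((M − 1)/√(2M − 1))·√(𝒰(z, 2a) − 𝒰(z, a)²), and V_M(a) := ((M − 1)/√(2M − 1))·√(Γ(2a + 1) − Γ(a + 1)²). Then, as z → ∞, 𝒰(z, a) + 𝒱_M(z, a) = (V_M(a) + Γ(a + 1))·z^{−a} + O(z^{−a − 1/2}). -/

import Mathlib

/-- Euler Beta function `B(p, q) = Γ(p)Γ(q)/Γ(p+q)`. -/
noncomputable def eulerBeta (p q : ℝ) : ℝ :=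
  Real.Gamma p * Real.Gamma q / Real.Gamma (p + q)

/-- `𝒰(z, a) := z·B(z, 1 + a)`. -/
noncomputable def Ufun (z a : ℝ) : ℝ := z * eulerBeta z (1 + a)

/-- `𝒱_M(z, a) := ((M−1)/√(2M−1))·√(𝒰(z, 2a) − 𝒰(z, a)²)`. -/
noncomputable def Vfun (M : ℕ) (z a : ℝ) : ℝ :=
  ((M : ℝ) - 1) / Real.sqrt (2 * M - 1) * Real.sqrt (Ufun z (2 * a) - Ufun z a ^ 2)

/-- `V_M(a) := ((M−1)/√(2M−1))·√(Γ(2a+1) − Γ(a+1)²)`. -/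
noncomputable def VMconst (M : ℕ) (a : ℝ) : ℝ :=
  ((M : ℝ) - 1) / Real.sqrt (2 * M - 1) *
    Real.sqrt (Real.Gamma (2 * a + 1) - Real.Gamma (a + 1) ^ 2)

open Real

section Aux

private lemma wendel_upper' {x s : ℝ} (hx : 0 < x) (hs : 0 < s) (hs1 : s ≤ 1) :
    Gamma (x + s) ≤ Gamma x * x ^ s := by
  rcases eq_or_lt_of_le hs1 with rfl | hs1
  · rw [Gamma_add_one hx.ne', rpow_one]; ring_nf; rfl
  · have h := Gamma_mul_add_mul_le_rpow_Gamma_mul_rpow_Gamma hx (by linarith : (0:ℝ) < x + 1)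
      (by linarith : (0:ℝ) < 1 - s) hs (by ring)
    have e1 : (1 - s) * x + s * (x + 1) = x + s := by ring
    rw [e1] at h
    calc Gamma (x + s) ≤ Gamma x ^ (1 - s) * Gamma (x + 1) ^ s := h
      _ = Gamma x * x ^ s := by
          rw [Gamma_add_one hx.ne', mul_rpow hx.le (Gamma_pos_of_pos hx).le,
            mul_comm (x ^ s), ← mul_assoc, ← rpow_add (Gamma_pos_of_pos hx),
            sub_add_cancel, rpow_one]

private lemma wendel_lower' {x s : ℝ} (hx : 0 < x) (hs : 0 < s) (hs1 : s ≤ 1) :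
    Gamma x * x ^ s * (x / (x + s)) ≤ Gamma (x + s) := by
  rcases eq_or_lt_of_le hs1 with rfl | hs1
  · rw [Gamma_add_one hx.ne', rpow_one]
    have hxx : x / (x + 1) ≤ 1 := by
      rw [div_le_one (by linarith)]; linarith
    have hg := Gamma_pos_of_pos hx
    calc Gamma x * x * (x / (x + 1)) ≤ Gamma x * x * 1 :=
          mul_le_mul_of_nonneg_left hxx (by positivity)
      _ = x * Gamma x := by ring
  · have hxs : 0 < x + s := by linarith
    have h := Gamma_mul_add_mul_le_rpow_Gamma_mul_rpow_Gamma hxs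
      (by linarith : (0:ℝ) < x + s + 1) hs (by linarith : (0:ℝ) < 1 - s) (by ring)
    have e1 : s * (x + s) + (1 - s) * (x + s + 1) = x + 1 := by ring
    rw [e1] at h
    have h2 : x * Gamma x ≤ Gamma (x + s) * (x + s) ^ (1 - s) := by
      rw [← Gamma_add_one hx.ne']
      calc Gamma (x + 1) ≤ Gamma (x+s) ^ s * Gamma (x+s+1) ^ (1-s) := h
        _ = Gamma (x+s) * (x+s) ^ (1-s) := by
            rw [Gamma_add_one hxs.ne',
              mul_rpow hxs.le (Gamma_pos_of_pos hxs).le,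
              mul_comm ((x+s) ^ (1-s)), ← mul_assoc,
              ← rpow_add (Gamma_pos_of_pos hxs), add_sub_cancel, rpow_one]
    have hprod : (x+s) ^ ((1:ℝ)-s) * (x+s) ^ (s-1) = 1 := by
      rw [← rpow_add hxs]; norm_num
    have h3 : x * Gamma x * (x + s) ^ (s - 1) ≤ Gamma (x + s) := by
      calc x * Gamma x * (x + s) ^ (s - 1)
          ≤ Gamma (x+s) * (x+s) ^ (1-s) * (x+s) ^ (s-1) :=
            mul_le_mul_of_nonneg_right h2 (rpow_nonneg hxs.le _)
        _ = Gamma (x+s) := by rw [mul_assoc, hprod, mul_one]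
    refine le_trans ?_ h3
    have h4 : x ^ s ≤ (x + s) ^ s := rpow_le_rpow hx.le (by linarith) hs.le
    have e2 : Gamma x * x ^ s * (x / (x+s)) = (Gamma x * x / (x+s)) * x ^ s := by ring
    have e3 : x * Gamma x * (x+s) ^ (s-1) = (Gamma x * x / (x+s)) * (x+s) ^ s := by
      rw [rpow_sub hxs, rpow_one]; ring
    rw [e2, e3]
    exact mul_le_mul_of_nonneg_left h4 (by positivity)

private lemma ratio_base' {a : ℝ} (ha : 0 < a) (hle : a ≤ 1) :
    ∀ x ≥ (1:ℝ), |Gamma (x + a) / (Gamma x * x ^ a) - 1| ≤ a / x := by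
  intro x hx
  have hx0 : (0:ℝ) < x := by linarith
  have hden : (0:ℝ) < Gamma x * x ^ a := by
    have := Gamma_pos_of_pos hx0; positivity
  set r := Gamma (x + a) / (Gamma x * x ^ a) with hr
  have hub : r ≤ 1 := by
    rw [hr, div_le_one hden]; exact wendel_upper' hx0 ha hle
  have hlb : x / (x + a) ≤ r := by
    rw [hr, le_div_iff₀ hden]
    calc x / (x + a) * (Gamma x * x ^ a) = Gamma x * x ^ a * (x / (x + a)) := by ring
      _ ≤ Gamma (x + a) := wendel_lower' hx0 ha hle
  have e : 1 - x / (x + a) = a / (x + a) := by field_simp; ring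
  have h2 : a / (x + a) ≤ a / x := by gcongr; linarith
  rw [abs_sub_comm, abs_of_nonneg (by linarith)]
  linarith

private lemma ratio_bound' (a : ℝ) (ha : 0 < a) :
    ∃ C > (0:ℝ), ∀ x ≥ (1:ℝ), |Gamma (x + a) / (Gamma x * x ^ a) - 1| ≤ C / x := by
  suffices aux : ∀ n : ℕ, ∀ a : ℝ, 0 < a → a ≤ n →
      ∃ C > (0:ℝ), ∀ x ≥ (1:ℝ), |Gamma (x + a) / (Gamma x * x ^ a) - 1| ≤ C / x by
    obtain ⟨n, hn⟩ := exists_nat_ge a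
    exact aux n a ha hn
  intro n
  induction n with
  | zero => intro a ha han; norm_num at han; linarith
  | succ n ih =>
    intro a ha han
    by_cases hle : a ≤ 1
    · exact ⟨a, ha, ratio_base' ha hle⟩
    · push_neg at hle
      set b := a - 1 with hb
      have hb0 : 0 < b := by simp [hb]; linarith
      have hbn : b ≤ n := by
        have : a ≤ (n:ℝ) + 1 := by exact_mod_cast han
        simp [hb]; linarith
      obtain ⟨C, hC, hbound⟩ := ih b hb0 hbn
      refine ⟨C + b + b * C, by positivity, ?_⟩
      intro x hx
      have hx0 : (0:ℝ) < x := by linarith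
      have hxb : (0:ℝ) < x + b := by linarith
      have hgx : 0 < Gamma x := Gamma_pos_of_pos hx0
      have hR := hbound x hx
      set R := Gamma (x + b) / (Gamma x * x ^ b) with hRdef
      have hrew : Gamma (x + a) / (Gamma x * x ^ a) = (1 + b / x) * R := by
        have hxbp : 0 < x ^ b := rpow_pos_of_pos hx0 b
        have h1 : Gamma (x + a) = (x + b) * Gamma (x + b) := by
          have : x + a = (x + b) + 1 := by rw [hb]; ring
          rw [this, Gamma_add_one hxb.ne']
        have h2 : x ^ a = x ^ b * x := by
          have : a = b + 1 := by rw [hb]; ring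
          rw [this, rpow_add hx0, rpow_one]
        rw [h1, h2, hRdef]
        field_simp
      have hRabs : |R| ≤ 1 + C / x := by
        have : |R| - |(1:ℝ)| ≤ |R - 1| := abs_sub_abs_le_abs_sub _ _
        simp at this; linarith
      have split : (1 + b / x) * R - 1 = (R - 1) + (b / x) * R := by ring
      rw [hrew, split]
      calc |(R - 1) + (b / x) * R| ≤ |R - 1| + |(b / x) * R| := abs_add_le _ _
        _ = |R - 1| + (b / x) * |R| := by
            rw [abs_mul, abs_of_nonneg (by positivity : (0:ℝ) ≤ b / x)]
        _ ≤ C / x + (b / x) * (1 + C / x) := by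
            have := mul_le_mul_of_nonneg_left hRabs
              (by positivity : (0:ℝ) ≤ b / x)
            linarith
        _ ≤ (C + b + b * C) / x := by
            have e : (C + b + b * C) / x - (C / x + b / x * (1 + C / x))
                = (b * C / x) * (1 - 1 / x) := by field_simp; ring
            have h1x : 1 / x ≤ 1 := by rw [div_le_one hx0]; linarith
            nlinarith [mul_nonneg (by positivity : (0:ℝ) ≤ b * C / x)
              (by linarith : (0:ℝ) ≤ 1 - 1 / x)]

private lemma U_est' (a : ℝ) (ha : 0 < a) :
    ∃ C > (0:ℝ), ∃ z₀ ≥ (1:ℝ), ∀ z ≥ z₀,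
      |Ufun z a - Gamma (a + 1) * z ^ (-a)| ≤ C * z ^ (-a - 1) := by
  obtain ⟨C₀, hC₀, hb⟩ := ratio_bound' a ha
  have hG : 0 < Gamma (a + 1) := Gamma_pos_of_pos (by linarith)
  refine ⟨2 * Gamma (a + 1) * (a + C₀), by positivity, max 1 (2 * C₀), le_max_left _ _, ?_⟩
  intro z hz
  have hz1 : (1:ℝ) ≤ z := le_trans (le_max_left _ _) hz
  have hz0 : (0:ℝ) < z := by linarith
  have hzC : 2 * C₀ ≤ z := le_trans (le_max_right _ _) hz
  have hza : (0:ℝ) < z + a := by linarith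
  have hgz : 0 < Gamma z := Gamma_pos_of_pos hz0
  have hgza : 0 < Gamma (z + a) := Gamma_pos_of_pos hza
  have hzpa : 0 < z ^ a := rpow_pos_of_pos hz0 a
  set R := Gamma (z + a) / (Gamma z * z ^ a) with hRdef
  have hR : |R - 1| ≤ C₀ / z := hb z hz1
  have hCz : C₀ / z ≤ 1 / 2 := by
    rw [div_le_div_iff₀ hz0 (by norm_num)]; linarith
  have hRlb : (1:ℝ) / 2 ≤ R := by
    have := abs_le.mp hR
    linarith
  have hR0 : 0 < R := by linarith
  have key : Ufun z a - Gamma (a + 1) * z ^ (-a)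
      = Gamma (a + 1) * z ^ (-a) * ((z / (z + a) - R) / R) := by
    unfold Ufun eulerBeta
    rw [show z + (1 + a) = (z + a) + 1 by ring, Gamma_add_one hza.ne',
      show (1 : ℝ) + a = a + 1 by ring, rpow_neg hz0.le, hRdef]
    field_simp
  have hp : |z / (z + a) - 1| ≤ a / z := by
    have e : 1 - z / (z + a) = a / (z + a) := by field_simp; ring
    have h2 : a / (z + a) ≤ a / z := by gcongr; linarith
    have h3 : z / (z + a) ≤ 1 := by rw [div_le_one hza]; linarith
    rw [abs_sub_comm, abs_of_nonneg (by linarith)]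
    linarith
  have hnum : |z / (z + a) - R| ≤ (a + C₀) / z := by
    calc |z / (z + a) - R| = |(z / (z + a) - 1) + (1 - R)| := by ring_nf
      _ ≤ |z / (z + a) - 1| + |1 - R| := abs_add_le _ _
      _ ≤ a / z + C₀ / z := by rw [abs_sub_comm (1:ℝ) R]; exact add_le_add hp hR
      _ = (a + C₀) / z := by rw [← add_div]
  rw [key]
  have hpow : 0 < z ^ (-a) := rpow_pos_of_pos hz0 _
  have e2 : |Gamma (a + 1) * z ^ (-a) * ((z / (z + a) - R) / R)|
      = Gamma (a + 1) * z ^ (-a) * (|z / (z + a) - R| / R) := by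
    rw [abs_mul, abs_div, abs_of_pos hR0,
      abs_of_pos (by positivity : (0:ℝ) < Gamma (a + 1) * z ^ (-a))]
  rw [e2]
  have h4 : |z / (z + a) - R| / R ≤ 2 * ((a + C₀) / z) := by
    calc |z / (z + a) - R| / R ≤ |z / (z + a) - R| / (1 / 2) :=
          div_le_div_of_nonneg_left (abs_nonneg _) (by norm_num) hRlb
      _ = 2 * |z / (z + a) - R| := by ring
      _ ≤ 2 * ((a + C₀) / z) := by linarith
  calc Gamma (a + 1) * z ^ (-a) * (|z / (z + a) - R| / R)
      ≤ Gamma (a + 1) * z ^ (-a) * (2 * ((a + C₀) / z)) := by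
        apply mul_le_mul_of_nonneg_left h4 (by positivity)
    _ = 2 * Gamma (a + 1) * (a + C₀) * z ^ (-a - 1) := by
        rw [show -a - 1 = -a + (-1) by ring, rpow_add hz0, rpow_neg_one]
        field_simp

private lemma sqrt_sub_sqrt_le' {u v : ℝ} (hu : 0 ≤ u) (huv : u ≤ v) :
    Real.sqrt v - Real.sqrt u ≤ Real.sqrt (v - u) := by
  have h1 : Real.sqrt v ≤ Real.sqrt u + Real.sqrt (v - u) := by
    have h2 : v ≤ (Real.sqrt u + Real.sqrt (v - u)) ^ 2 := by
      have e1 := Real.sq_sqrt hu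
      have e2 := Real.sq_sqrt (by linarith : (0:ℝ) ≤ v - u)
      nlinarith [mul_nonneg (Real.sqrt_nonneg u) (Real.sqrt_nonneg (v - u))]
    calc Real.sqrt v ≤ Real.sqrt ((Real.sqrt u + Real.sqrt (v - u)) ^ 2) :=
          Real.sqrt_le_sqrt h2
      _ = Real.sqrt u + Real.sqrt (v - u) := Real.sqrt_sq (by positivity)
  linarith

private lemma abs_sqrt_sub_sqrt_le' (x y : ℝ) (hy : 0 ≤ y) :
    |Real.sqrt x - Real.sqrt y| ≤ Real.sqrt |x - y| := by
  rcases le_or_gt x 0 with hx | hx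
  · rw [Real.sqrt_eq_zero'.mpr hx, zero_sub, abs_neg,
      abs_of_nonneg (Real.sqrt_nonneg y), abs_of_nonpos (by linarith : x - y ≤ 0)]
    exact Real.sqrt_le_sqrt (by linarith)
  · rcases le_total x y with h | h
    · rw [abs_sub_comm, abs_sub_comm x y,
        abs_of_nonneg (sub_nonneg.mpr (Real.sqrt_le_sqrt h)),
        abs_of_nonneg (by linarith : (0:ℝ) ≤ y - x)]
      exact sqrt_sub_sqrt_le' hx.le h
    · rw [abs_of_nonneg (sub_nonneg.mpr (Real.sqrt_le_sqrt h)),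
        abs_of_nonneg (by linarith : (0:ℝ) ≤ x - y)]
      exact sqrt_sub_sqrt_le' hy h

private lemma gamma_sq_le' {a : ℝ} (ha : 0 < a) :
    Gamma (a + 1) ^ 2 ≤ Gamma (2 * a + 1) := by
  have h2a : (0:ℝ) < 2 * a + 1 := by linarith
  have h := Gamma_mul_add_mul_le_rpow_Gamma_mul_rpow_Gamma
    (by norm_num : (0:ℝ) < 1) h2a (by norm_num : (0:ℝ) < 1/2)
    (by norm_num : (0:ℝ) < 1/2) (by norm_num)
  have e1 : (1:ℝ)/2 * 1 + 1/2 * (2 * a + 1) = a + 1 := by ring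
  rw [e1, Gamma_one, one_rpow, one_mul] at h
  have hG2 : 0 ≤ Gamma (2 * a + 1) := (Gamma_pos_of_pos h2a).le
  have h2 : Gamma (a + 1) ^ 2 ≤ (Gamma (2 * a + 1) ^ ((1:ℝ)/2)) ^ 2 :=
    pow_le_pow_left₀ (Gamma_pos_of_pos (by linarith : (0:ℝ) < a + 1)).le h 2
  refine h2.trans_eq ?_
  rw [← Real.rpow_natCast (Gamma (2 * a + 1) ^ ((1:ℝ)/2)) 2, ← Real.rpow_mul hG2]
  norm_num

end Aux

set_option maxHeartbeats 1000000 in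
/-- Asymptotic expansion:
`𝒰(z, a) + 𝒱_M(z, a) = (V_M(a) + Γ(a+1))·z^{−a} + O(z^{−a−1/2})` as `z → ∞`. -/
theorem stmt_12 (a : ℝ) (ha : 0 < a) (M : ℕ) (hM : 1 ≤ M) :
    ∃ C > (0 : ℝ), ∃ z₀ > (0 : ℝ), ∀ z ≥ z₀,
      |Ufun z a + Vfun M z a - (VMconst M a + Real.Gamma (a + 1)) * z ^ (-a)| ≤
        C * z ^ (-a - 1 / 2) := by
  obtain ⟨C₁, hC₁, z₁, hz₁, h₁⟩ := U_est' a ha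
  obtain ⟨C₂, hC₂, z₂, hz₂, h₂⟩ := U_est' (2 * a) (by linarith)
  set G := Gamma (a + 1) with hGdef
  set G2 := Gamma (2 * a + 1) with hG2def
  have hG : 0 < G := Gamma_pos_of_pos (by linarith)
  have hc : 0 ≤ G2 - G ^ 2 := sub_nonneg.mpr (gamma_sq_le' ha)
  set kM : ℝ := ((M : ℝ) - 1) / Real.sqrt (2 * M - 1) with hkM
  have hkM0 : 0 ≤ kM := by
    apply div_nonneg _ (Real.sqrt_nonneg _)
    have : (1:ℝ) ≤ M := by exact_mod_cast hM
    linarith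
  set K : ℝ := C₂ + C₁ * (C₁ + 2 * G) with hK
  have hK0 : 0 < K := by positivity
  refine ⟨C₁ + kM * Real.sqrt K + 1, by positivity, max z₁ z₂,
    by have := le_trans hz₁ (le_max_left z₁ z₂); linarith, ?_⟩
  intro z hz
  have hz1 : (1:ℝ) ≤ z := le_trans hz₁ (le_trans (le_max_left z₁ z₂) hz)
  have hz0 : (0:ℝ) < z := by linarith
  have hU1 := h₁ z (le_trans (le_max_left z₁ z₂) hz)
  have hU2 := h₂ z (le_trans (le_max_right z₁ z₂) hz)
  -- power facts
  have hpow_a : 0 < z ^ (-a) := rpow_pos_of_pos hz0 _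
  have hmono : z ^ (-a - 1) ≤ z ^ (-a - 1/2) :=
    rpow_le_rpow_of_exponent_le hz1 (by linarith)
  have hmono2 : z ^ (-a - 1) ≤ z ^ (-a) :=
    rpow_le_rpow_of_exponent_le hz1 (by linarith)
  have hsq : z ^ (-(2 * a)) = (z ^ (-a)) ^ 2 := by
    rw [← Real.rpow_natCast (z ^ (-a)) 2, ← Real.rpow_mul hz0.le]
    norm_num; ring_nf
  have hsplit : z ^ (-(2 * a) - 1) = z ^ (-a - 1) * z ^ (-a) := by
    rw [← rpow_add hz0]; ring_nf
  have hhalf : z ^ (-(2 * a) - 1) = (z ^ (-a - 1/2)) ^ 2 := by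
    rw [← Real.rpow_natCast (z ^ (-a - 1/2)) 2, ← Real.rpow_mul hz0.le]
    norm_num; ring_nf
  -- Step A : Ufun term
  have stepA : |Ufun z a - G * z ^ (-a)| ≤ C₁ * z ^ (-a - 1/2) := by
    refine hU1.trans ?_
    exact mul_le_mul_of_nonneg_left hmono hC₁.le
  -- bound on |Ufun z a|
  have hUb : |Ufun z a + G * z ^ (-a)| ≤ (C₁ + 2 * G) * z ^ (-a) := by
    have h5 : |Ufun z a + G * z ^ (-a)|
        ≤ |Ufun z a - G * z ^ (-a)| + 2 * (G * z ^ (-a)) := by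
      have := abs_nonneg (Ufun z a - G * z ^ (-a))
      have h6 := abs_le.mp (le_refl |Ufun z a - G * z ^ (-a)|)
      rw [abs_le]; constructor <;> nlinarith [abs_le.mp (le_refl |Ufun z a - G * z ^ (-a)|)]
    refine h5.trans ?_
    have : |Ufun z a - G * z ^ (-a)| ≤ C₁ * z ^ (-a) :=
      hU1.trans (mul_le_mul_of_nonneg_left hmono2 hC₁.le)
    nlinarith
  -- Step B : |D - c z^{-2a}| ≤ K z^{-2a-1}
  set D := Ufun z (2 * a) - Ufun z a ^ 2 with hD
  set c := G2 - G ^ 2 with hcdef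
  have stepB : |D - c * z ^ (-(2 * a))| ≤ K * z ^ (-(2 * a) - 1) := by
    have e : D - c * z ^ (-(2 * a))
        = (Ufun z (2 * a) - G2 * z ^ (-(2 * a)))
          - (Ufun z a - G * z ^ (-a)) * (Ufun z a + G * z ^ (-a)) := by
      rw [hD, hcdef, hsq]; ring
    rw [e]
    calc |(Ufun z (2 * a) - G2 * z ^ (-(2 * a)))
          - (Ufun z a - G * z ^ (-a)) * (Ufun z a + G * z ^ (-a))|
        ≤ |Ufun z (2 * a) - G2 * z ^ (-(2 * a))|
          + |Ufun z a - G * z ^ (-a)| * |Ufun z a + G * z ^ (-a)| := by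
          rw [← abs_mul]; exact abs_sub _ _
      _ ≤ C₂ * z ^ (-(2 * a) - 1) + (C₁ * z ^ (-a - 1)) * ((C₁ + 2 * G) * z ^ (-a)) := by
          refine add_le_add hU2 ?_
          exact mul_le_mul hU1 hUb (abs_nonneg _) (by positivity)
      _ = K * z ^ (-(2 * a) - 1) := by rw [hK, hsplit]; ring
  -- Step C : sqrt estimate
  have stepC : |Real.sqrt D - Real.sqrt c * z ^ (-a)| ≤ Real.sqrt K * z ^ (-a - 1/2) := by
    have e1 : Real.sqrt c * z ^ (-a) = Real.sqrt (c * z ^ (-(2 * a))) := by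
      rw [Real.sqrt_mul hc, hsq, Real.sqrt_sq hpow_a.le]
    rw [e1]
    calc |Real.sqrt D - Real.sqrt (c * z ^ (-(2 * a)))|
        ≤ Real.sqrt |D - c * z ^ (-(2 * a))| :=
          abs_sqrt_sub_sqrt_le' _ _ (by positivity)
      _ ≤ Real.sqrt (K * z ^ (-(2 * a) - 1)) := Real.sqrt_le_sqrt stepB
      _ = Real.sqrt K * z ^ (-a - 1/2) := by
          rw [Real.sqrt_mul hK0.le, hhalf, Real.sqrt_sq (by positivity)]
  -- Step D : Vfun term
  have stepD : |Vfun M z a - VMconst M a * z ^ (-a)| ≤ kM * Real.sqrt K * z ^ (-a - 1/2) := by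
    have e : Vfun M z a - VMconst M a * z ^ (-a)
        = kM * (Real.sqrt D - Real.sqrt c * z ^ (-a)) := by
      rw [Vfun, VMconst, hkM, hD, hcdef, hGdef, hG2def]; ring
    rw [e, abs_mul, abs_of_nonneg hkM0, mul_assoc]
    exact mul_le_mul_of_nonneg_left stepC hkM0
  -- conclude
  have efin : Ufun z a + Vfun M z a - (VMconst M a + G) * z ^ (-a)
      = (Ufun z a - G * z ^ (-a)) + (Vfun M z a - VMconst M a * z ^ (-a)) := by ring
  rw [efin]
  calc |(Ufun z a - G * z ^ (-a)) + (Vfun M z a - VMconst M a * z ^ (-a))|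
      ≤ |Ufun z a - G * z ^ (-a)| + |Vfun M z a - VMconst M a * z ^ (-a)| := abs_add_le _ _
    _ ≤ C₁ * z ^ (-a - 1/2) + kM * Real.sqrt K * z ^ (-a - 1/2) := add_le_add stepA stepD
    _ ≤ (C₁ + kM * Real.sqrt K + 1) * z ^ (-a - 1/2) := by
        have : (0:ℝ) < z ^ (-a - 1/2) := rpow_pos_of_pos hz0 _
        nlinarith
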